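/- Let B be an interval in ℝ and f ∈ C^ℓ(B) with a ≤ |f^{(ℓ)}(x)| ≤ A for all x ∈ B, where 0 < a ≤ A. Then there is a constant C₁ (absolute) such that for all ε > 0, λ({x ∈ B : |f(x)| < ε}) ≤ ℓ C₁ (A/a)^{1/ℓ} (ε / ‖f‖_{λ,B})^{1/ℓ} λ(B). -/

import Mathlib

open Set MeasureTheory

lemma iterated_rolle {b₁ b₂ : ℝ} (hb : b₁ < b₂) :
    ∀ (n : ℕ) (g : ℝ → ℝ), ContDiffOn ℝ n g (Set.Icc b₁ b₂) →
    ∀ x : ℕ → ℝ, (∀ i j, i < j → j ≤ n → x i < x j) → (∀ i ≤ n, x i ∈ Set.Icc b₁ b₂) →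
    (∀ i ≤ n, g (x i) = 0) →
    ∃ ξ ∈ Set.Icc b₁ b₂, iteratedDerivWithin n g (Set.Icc b₁ b₂) ξ = 0 := by
  intro n
  induction n with
  | zero =>
    intro g _ x _ hmem hz
    exact ⟨x 0, hmem 0 le_rfl, by simpa [iteratedDerivWithin_zero] using hz 0 le_rfl⟩
  | succ n IH =>
    intro g hg x hmono hmem hz
    set s := Set.Icc b₁ b₂ with hsdef
    have hs : UniqueDiffOn ℝ s := uniqueDiffOn_Icc hb
    have key : ∀ i, i ≤ n → ∃ c, c ∈ Set.Ioo (x i) (x (i+1)) ∧ derivWithin g s c = 0 := by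
      intro i hi
      have hii : x i < x (i+1) := hmono i (i+1) (Nat.lt_succ_self i) (Nat.succ_le_succ hi)
      have hm1 : x i ∈ s := hmem i (le_trans hi (Nat.le_succ n))
      have hm2 : x (i+1) ∈ s := hmem (i+1) (Nat.succ_le_succ hi)
      have h1 : Set.Icc (x i) (x (i+1)) ⊆ s := Set.Icc_subset_Icc hm1.1 hm2.2
      obtain ⟨c, hc, hc0⟩ := exists_deriv_eq_zero hii (hg.continuousOn.mono h1)
        (by rw [hz i (le_trans hi (Nat.le_succ n)), hz (i+1) (Nat.succ_le_succ hi)])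
      refine ⟨c, hc, ?_⟩
      have hcs : c ∈ Set.Ioo b₁ b₂ := ⟨lt_of_le_of_lt hm1.1 hc.1, lt_of_lt_of_le hc.2 hm2.2⟩
      have hdiff : DifferentiableAt ℝ g c := by
        have h2 : DifferentiableWithinAt ℝ g s c :=
          (hg.differentiableOn (by simp)) c (h1 (Set.Ioo_subset_Icc_self hc))
        exact h2.differentiableAt (Icc_mem_nhds hcs.1 hcs.2)
      rw [hdiff.derivWithin (hs.uniqueDiffWithinAt (h1 (Set.Ioo_subset_Icc_self hc)))]
      exact hc0
    choose! z hz1 hz2 using key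
    have hg' : ContDiffOn ℝ n (derivWithin g s) s :=
      hg.derivWithin hs (by exact_mod_cast le_rfl)
    have hzmem : ∀ i ≤ n, z i ∈ s := fun i hi =>
      ⟨le_trans (hmem i (le_trans hi (Nat.le_succ n))).1 (le_of_lt (hz1 i hi).1),
       le_trans (le_of_lt (hz1 i hi).2) (hmem (i+1) (Nat.succ_le_succ hi)).2⟩
    have hzmono : ∀ i j, i < j → j ≤ n → z i < z j := by
      intro i j hij hj
      calc z i < x (i+1) := (hz1 i (le_trans (le_of_lt hij) hj)).2
        _ ≤ x j := by
          rcases Nat.lt_or_ge (i+1) j with h | h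
          · exact le_of_lt (hmono (i+1) j h (le_trans hj (Nat.le_succ n)))
          · have : i + 1 = j := le_antisymm (Nat.succ_le_of_lt hij) h
            rw [this]
        _ < z j := (hz1 j hj).1
    obtain ⟨ξ, hξs, hξ⟩ := IH (derivWithin g s) hg' z hzmono hzmem hz2
    exact ⟨ξ, hξs, by rw [iteratedDerivWithin_succ']; exact hξ⟩

lemma poly_contDiff (Q : Polynomial ℝ) {n : ℕ∞} : ContDiff ℝ n fun x : ℝ => Q.eval x := by
  induction Q using Polynomial.induction_on' with
  | add p q hp hq => simpa [Polynomial.eval_add] using hp.add hq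
  | monomial k a =>
      simpa [Polynomial.eval_monomial] using (contDiff_const (c := a)).mul (contDiff_id.pow k)

lemma iter_deriv_poly {b₁ b₂ : ℝ} (hb : b₁ < b₂) (Q : Polynomial ℝ) :
    ∀ (k : ℕ), ∀ x ∈ Set.Icc b₁ b₂,
      iteratedDerivWithin k (fun t => Q.eval t) (Set.Icc b₁ b₂) x
        = (Polynomial.derivative^[k] Q).eval x := by
  intro k
  induction k with
  | zero => intro x _; simp
  | succ k IH =>
    intro x hx
    rw [iteratedDerivWithin_succ]
    have h1 : derivWithin (iteratedDerivWithin k (fun t => Q.eval t) (Set.Icc b₁ b₂))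
        (Set.Icc b₁ b₂) x
        = derivWithin (fun t => (Polynomial.derivative^[k] Q).eval t) (Set.Icc b₁ b₂) x :=
      derivWithin_congr (fun y hy => IH y hy) (IH x hx)
    rw [h1, (Polynomial.differentiableAt _).derivWithin
      ((uniqueDiffOn_Icc hb).uniqueDiffWithinAt hx), Polynomial.deriv,
      Function.iterate_succ_apply']

lemma iterate_derivative_eq_C {Q : Polynomial ℝ} {n : ℕ} (h : Q.natDegree ≤ n) :
    Polynomial.derivative^[n] Q = Polynomial.C ((n.factorial : ℝ) * Q.coeff n) := by
  have h0 : (Polynomial.derivative^[n] Q).natDegree ≤ 0 :=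
    le_trans (Polynomial.natDegree_iterate_derivative Q n) (by omega)
  rw [Polynomial.eq_C_of_natDegree_le_zero h0, Polynomial.coeff_iterate_derivative]
  simp [Nat.descFactorial_self, nsmul_eq_mul]

lemma coeff_interpolate {n : ℕ} (x : ℕ → ℝ) (r : ℕ → ℝ) :
    (Lagrange.interpolate (Finset.range (n+1)) x r).coeff n
      = ∑ i ∈ Finset.range (n+1), r i * ∏ j ∈ (Finset.range (n+1)).erase i, (x i - x j)⁻¹ := by
  rw [Lagrange.interpolate_apply, Polynomial.finset_sum_coeff]
  refine Finset.sum_congr rfl fun i hi => ?_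
  rw [Polynomial.coeff_C_mul]
  congr 1
  have hb : Lagrange.basis (Finset.range (n+1)) x i
      = Polynomial.C (∏ j ∈ (Finset.range (n+1)).erase i, (x i - x j)⁻¹)
        * ∏ j ∈ (Finset.range (n+1)).erase i, (Polynomial.X - Polynomial.C (x j)) := by
    rw [Lagrange.basis, map_prod, ← Finset.prod_mul_distrib]
    exact Finset.prod_congr rfl fun j _ => rfl
  rw [hb, Polynomial.coeff_C_mul]
  have hmonic : (∏ j ∈ (Finset.range (n+1)).erase i, (Polynomial.X - Polynomial.C (x j))).Monic :=
    Polynomial.monic_prod_of_monic _ _ (fun j _ => Polynomial.monic_X_sub_C _)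
  have hdeg : (∏ j ∈ (Finset.range (n+1)).erase i, (Polynomial.X - Polynomial.C (x j))).natDegree = n := by
    rw [Polynomial.natDegree_prod_of_monic _ _ (fun j _ => Polynomial.monic_X_sub_C _)]
    simp [Polynomial.natDegree_X_sub_C, Finset.card_erase_of_mem, hi]
  have hc := hmonic.coeff_natDegree
  rw [hdeg] at hc
  rw [hc, mul_one]
lemma dd_mvt {b₁ b₂ : ℝ} (hb : b₁ < b₂) (n : ℕ) (f : ℝ → ℝ)
    (hf : ContDiffOn ℝ n f (Set.Icc b₁ b₂)) (x : ℕ → ℝ)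
    (hmono : ∀ i j, i < j → j ≤ n → x i < x j) (hmem : ∀ i ≤ n, x i ∈ Set.Icc b₁ b₂) :
    ∃ ξ ∈ Set.Icc b₁ b₂, iteratedDerivWithin n f (Set.Icc b₁ b₂) ξ
      = (n.factorial : ℝ) * ∑ i ∈ Finset.range (n+1), f (x i) *
          ∏ j ∈ (Finset.range (n+1)).erase i, (x i - x j)⁻¹ := by
  have hinj : Set.InjOn x (Finset.range (n+1)) := by
    intro i hi j hj hij
    simp only [Finset.coe_range, Set.mem_Iio] at hi hj
    by_contra hne
    rcases Nat.lt_or_ge i j with h | h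
    · exact absurd hij (ne_of_lt (hmono i j h (Nat.lt_succ_iff.mp hj)))
    · exact absurd hij.symm
        (ne_of_lt (hmono j i (lt_of_le_of_ne h (fun e => hne e.symm)) (Nat.lt_succ_iff.mp hi)))
  set P := Lagrange.interpolate (Finset.range (n+1)) x (fun i => f (x i)) with hPdef
  have hPc : ContDiffOn ℝ n (fun t => P.eval t) (Set.Icc b₁ b₂) := (poly_contDiff P).contDiffOn
  have hzero : ∀ i ≤ n, (f - fun t => P.eval t) (x i) = 0 := by
    intro i hi
    have := Lagrange.eval_interpolate_at_node (fun i => f (x i)) hinj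
      (Finset.mem_range.mpr (Nat.lt_succ_of_le hi))
    simp only [Pi.sub_apply]
    rw [← hPdef] at this
    rw [this]
    ring
  obtain ⟨ξ, hξs, hξ⟩ := iterated_rolle hb n (f - fun t => P.eval t) (hf.sub hPc) x hmono hmem hzero
  refine ⟨ξ, hξs, ?_⟩
  have hsub : iteratedDerivWithin n (f - fun t => P.eval t) (Set.Icc b₁ b₂) ξ
      = iteratedDerivWithin n f (Set.Icc b₁ b₂) ξ
        - iteratedDerivWithin n (fun t => P.eval t) (Set.Icc b₁ b₂) ξ :=
    iteratedDerivWithin_sub hξs (uniqueDiffOn_Icc hb) (hf.contDiffWithinAt hξs) (hPc.contDiffWithinAt hξs)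
  have hdg : P.natDegree ≤ n := by
    by_cases hP0 : P = 0
    · simp [hP0]
    · have h1 := Lagrange.degree_interpolate_lt (fun i => f (x i)) hinj
      rw [← hPdef] at h1
      have h2 : P.natDegree < n + 1 := by
        rw [Polynomial.natDegree_lt_iff_degree_lt hP0]
        simpa using h1
      omega
  have hiter : iteratedDerivWithin n (fun t => P.eval t) (Set.Icc b₁ b₂) ξ
      = (n.factorial : ℝ) * ∑ i ∈ Finset.range (n+1), f (x i) *
          ∏ j ∈ (Finset.range (n+1)).erase i, (x i - x j)⁻¹ := by
    rw [iter_deriv_poly hb P n ξ hξs, iterate_derivative_eq_C hdg, Polynomial.eval_C,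
      hPdef, coeff_interpolate]
  rw [hsub, hiter] at hξ
  linarith [hξ]

lemma point_selection {b₁ b₂ : ℝ} (hb : b₁ < b₂) (E : Set ℝ) (hE : E ⊆ Set.Icc b₁ b₂)
    (n : ℕ) (hm : 0 < (volume E).toReal) :
    ∃ x : ℕ → ℝ, (∀ i ≤ n, x i ∈ E) ∧
      (∀ i j, i < j → j ≤ n → (volume E).toReal / (2*n+2) ≤ x j - x i) := by
  set m := (volume E).toReal with hmdef
  set d : ℝ := m / (2*n+2) with hddef
  have hdpos : 0 < d := div_pos hm (by positivity)
  have hEfin : volume E ≠ ⊤ := by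
    refine ne_top_of_le_ne_top ?_ (measure_mono hE)
    simp [Real.volume_Icc]
  have hfin : ∀ t : ℝ, volume (E ∩ Set.Iic t) ≠ ⊤ :=
    fun t => ne_top_of_le_ne_top hEfin (measure_mono Set.inter_subset_left)
  set φ : ℝ → ℝ := fun t => (volume (E ∩ Set.Iic t)).toReal with hφdef
  have hmono : Monotone φ := fun u w huw =>
    ENNReal.toReal_mono (hfin w) (measure_mono (Set.inter_subset_inter_right _ (Set.Iic_subset_Iic.mpr huw)))
  have hsplit : ∀ u w : ℝ, u ≤ w → φ w ≤ φ u + (volume (E ∩ Set.Ioc u w)).toReal := by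
    intro u w huw
    have hsub : E ∩ Set.Iic w ⊆ (E ∩ Set.Iic u) ∪ (E ∩ Set.Ioc u w) := by
      intro y ⟨hy1, hy2⟩
      rcases le_or_gt y u with h | h
      · exact Or.inl ⟨hy1, h⟩
      · exact Or.inr ⟨hy1, h, hy2⟩
    calc φ w ≤ ((volume (E ∩ Set.Iic u)) + volume (E ∩ Set.Ioc u w)).toReal := by
          refine ENNReal.toReal_mono ?_ (le_trans (measure_mono hsub) (measure_union_le _ _))
          exact ENNReal.add_ne_top.mpr ⟨hfin u, ne_top_of_le_ne_top hEfin (measure_mono Set.inter_subset_left)⟩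
      _ = φ u + (volume (E ∩ Set.Ioc u w)).toReal :=
          ENNReal.toReal_add (hfin u) (ne_top_of_le_ne_top hEfin (measure_mono Set.inter_subset_left))
  have hlip : ∀ u w : ℝ, u ≤ w → φ w ≤ φ u + (w - u) := by
    intro u w huw
    refine le_trans (hsplit u w huw) (add_le_add le_rfl ?_)
    calc (volume (E ∩ Set.Ioc u w)).toReal ≤ (volume (Set.Ioc u w)).toReal := by
          refine ENNReal.toReal_mono ?_ (measure_mono Set.inter_subset_right)
          simp [Real.volume_Ioc]
      _ = w - u := by rw [Real.volume_Ioc, ENNReal.toReal_ofReal (by linarith)]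
  have hcont : Continuous φ := by
    have : LipschitzWith 1 φ := by
      refine LipschitzWith.of_dist_le_mul fun u w => ?_
      rw [Real.dist_eq, Real.dist_eq, NNReal.coe_one, one_mul]
      rcases le_total u w with h | h
      · rw [abs_sub_comm, abs_of_nonneg (by linarith [hmono h] : (0:ℝ) ≤ φ w - φ u),
          abs_of_nonpos (by linarith : u - w ≤ 0)]
        have := hlip u w h; linarith
      · rw [abs_of_nonneg (by linarith [hmono h] : (0:ℝ) ≤ φ u - φ w),
          abs_of_nonneg (by linarith : (0:ℝ) ≤ u - w)]
        have := hlip w u h; linarith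
    exact this.continuous
  have hφb₁ : φ b₁ = 0 := by
    have : E ∩ Set.Iic b₁ ⊆ {b₁} := by
      intro y ⟨hy1, hy2⟩
      exact le_antisymm hy2 (hE hy1).1
    have h0 : volume (E ∩ Set.Iic b₁) = 0 :=
      le_antisymm (le_trans (measure_mono this) (by simp)) (by positivity)
    simp [hφdef, h0]
  have hφb₂ : φ b₂ = m := by
    have : E ∩ Set.Iic b₂ = E := Set.inter_eq_left.mpr (fun y hy => (hE hy).2)
    show (volume (E ∩ Set.Iic b₂)).toReal = m
    rw [this]
  have hsum : ((2*n+2 : ℕ) : ℝ) * d = m := by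
    rw [hddef]; field_simp; push_cast; ring
  -- choose t r with φ (t r) = min r (2n+2) * d
  have ht : ∀ r : ℕ, ∃ t ∈ Set.Icc b₁ b₂, φ t = (min r (2*n+2) : ℕ) * d := by
    intro r
    have hv1 : (0:ℝ) ≤ (min r (2*n+2) : ℕ) * d := by positivity
    have hv2 : ((min r (2*n+2) : ℕ) : ℝ) * d ≤ m := by
      rw [← hsum]
      have : ((min r (2*n+2) : ℕ) : ℝ) ≤ ((2*n+2 : ℕ) : ℝ) := by
        exact_mod_cast Nat.min_le_right r (2*n+2)
      nlinarith [hdpos.le]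
    have := intermediate_value_Icc hb.le hcont.continuousOn (a := b₁) (b := b₂)
    have hmem : ((min r (2*n+2) : ℕ) : ℝ) * d ∈ Set.Icc (φ b₁) (φ b₂) := by
      rw [hφb₁, hφb₂]; exact ⟨hv1, hv2⟩
    exact this hmem
  choose t ht1 ht2 using ht
  have hφt : ∀ r : ℕ, r ≤ 2*n+2 → φ (t r) = r * d := by
    intro r hr
    rw [ht2 r, Nat.min_eq_left hr]
  -- order of t's
  have htord : ∀ r r' : ℕ, r < r' → r' ≤ 2*n+2 → t r ≤ t r' := by
    intro r r' hrr' hr'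
    by_contra hcon
    push_neg at hcon
    have h1 : φ (t r') ≤ φ (t r) := hmono hcon.le
    rw [hφt r (by omega), hφt r' hr'] at h1
    have : (r:ℝ) < (r':ℝ) := by exact_mod_cast hrr'
    nlinarith
  -- choose points
  have hpt : ∀ i : ℕ, ∃ p : ℝ, i ≤ n → p ∈ E ∩ Set.Ioc (t (2*i)) (t (2*i+1)) := by
    intro i
    by_cases hi : i ≤ n
    · have ho : t (2*i) ≤ t (2*i+1) := htord _ _ (by omega) (by omega)
      have h1 := hsplit (t (2*i)) (t (2*i+1)) ho
      rw [hφt (2*i) (by omega), hφt (2*i+1) (by omega)] at h1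
      have h2 : d ≤ (volume (E ∩ Set.Ioc (t (2*i)) (t (2*i+1)))).toReal := by
        push_cast at h1; linarith
      have hne : (E ∩ Set.Ioc (t (2*i)) (t (2*i+1))).Nonempty := by
        rw [Set.nonempty_iff_ne_empty]
        intro hemp
        rw [hemp] at h2
        simp at h2
        linarith
      obtain ⟨p, hp⟩ := hne
      exact ⟨p, fun _ => hp⟩
    · exact ⟨0, fun h => absurd h hi⟩
  choose x hx using hpt
  refine ⟨x, fun i hi => (hx i hi).1, ?_⟩
  intro i j hij hj
  have hxi := hx i (by omega)
  have hxj := hx j hj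
  have h1 : x i ≤ t (2*i+1) := hxi.2.2
  have h2 : t (2*j) < x j := hxj.2.1
  have h3 : t (2*i+1) ≤ t (2*j) := htord _ _ (by omega) (by omega)
  have h4 := hlip (t (2*i+1)) (t (2*j)) h3
  rw [hφt (2*i+1) (by omega), hφt (2*j) (by omega)] at h4
  have h5 : ((2*i+1 : ℕ) : ℝ) + 1 ≤ ((2*j : ℕ) : ℝ) := by
    have : 2*i+1+1 ≤ 2*j := by omega
    exact_mod_cast this
  nlinarith
lemma aux_two_mul_le (n : ℕ) : 1 ≤ n → 2*n ≤ 2^n := by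
  induction n with
  | zero => omega
  | succ k ih =>
    intro _
    by_cases hk : k = 0
    · subst hk; norm_num
    · have h1 := ih (by omega)
      have h2 : 2 ≤ 2^k := Nat.one_lt_two_pow_iff.mpr hk
      have h3 : 2^(k+1) = 2^k * 2 := pow_succ 2 k
      omega

lemma aux_two_succ_le (n : ℕ) : 1 ≤ n → 2*(n+1) ≤ 4^n := by
  induction n with
  | zero => omega
  | succ k ih =>
    intro _
    by_cases hk : k = 0
    · subst hk; norm_num
    · have h1 := ih (by omega)
      have h2 : 1 ≤ 4^k := Nat.one_le_pow k 4 (by norm_num)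
      have h3 : 4^(k+1) = 4^k * 4 := pow_succ 4 k
      omega
open MeasureTheory

set_option maxHeartbeats 2000000 in
theorem one_dim_good_lemma :
    ∃ C₁ > (0:ℝ), ∀ (ℓ : ℕ), 1 ≤ ℓ → ∀ (a A : ℝ), 0 < a → a ≤ A →
      ∀ (b₁ b₂ : ℝ), b₁ < b₂ → ∀ f : ℝ → ℝ,
        ContDiffOn ℝ ℓ f (Set.Icc b₁ b₂) →
        (∀ x ∈ Set.Icc b₁ b₂,
          a ≤ |iteratedDerivWithin ℓ f (Set.Icc b₁ b₂) x| ∧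
          |iteratedDerivWithin ℓ f (Set.Icc b₁ b₂) x| ≤ A) →
        ∀ ε > (0:ℝ),
          volume {x ∈ Set.Icc b₁ b₂ | |f x| < ε} ≤
            ENNReal.ofReal ((ℓ : ℝ) * C₁ * (A / a) ^ ((1:ℝ)/ℓ) *
              (ε / sSup ((fun x => |f x|) '' Set.Icc b₁ b₂)) ^ ((1:ℝ)/ℓ)) *
            volume (Set.Icc b₁ b₂) := by
  classical
  refine ⟨16, by norm_num, ?_⟩
  intro ℓ hℓ a A ha haA b₁ b₂ hb f hf hder ε hε
  set s := Set.Icc b₁ b₂ with hsdef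
  set L : ℝ := b₂ - b₁ with hLdef
  have hL : 0 < L := sub_pos.mpr hb
  set N := Finset.range (ℓ+1) with hNdef
  set M := sSup ((fun x => |f x|) '' s) with hMdef
  set E := {x ∈ s | |f x| < ε} with hEdef
  set α : ℝ := (1:ℝ)/(ℓ:ℝ) with hαdef
  have hℓR : (1:ℝ) ≤ (ℓ:ℝ) := by exact_mod_cast hℓ
  have hℓ0 : ℓ ≠ 0 := by omega
  have hα : 0 ≤ α := by rw [hαdef]; positivity
  have hα_inv : α = ((ℓ:ℝ))⁻¹ := one_div _
  have hfa : (0:ℝ) < ℓ.factorial := by exact_mod_cast ℓ.factorial_pos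
  -- sup facts
  have hfc : ContinuousOn (fun x => |f x|) s := hf.continuousOn.abs
  have hcpt : IsCompact s := isCompact_Icc
  have hsne : s.Nonempty := Set.nonempty_Icc.mpr hb.le
  have hbdd : BddAbove ((fun x => |f x|) '' s) := (hcpt.image_of_continuousOn hfc).bddAbove
  have hM_ub : ∀ x ∈ s, |f x| ≤ M := fun x hx => le_csSup hbdd ⟨x, hx, rfl⟩
  obtain ⟨y, hys, hymax⟩ := hcpt.exists_isMaxOn hsne hfc
  have hyM : M = |f y| :=
    le_antisymm (csSup_le (hsne.image _) (fun b ⟨x, hx, e⟩ => e ▸ hymax hx)) (hM_ub y hys)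
  have hMnn : 0 ≤ M := hyM ▸ abs_nonneg _
  -- volume facts
  have hvol_s : volume s = ENNReal.ofReal L := by rw [hsdef, Real.volume_Icc]
  have hEsub : E ⊆ s := fun x hx => hx.1
  have hEfin : volume E ≠ ⊤ :=
    ne_top_of_le_ne_top (by simp [hvol_s]) (measure_mono (μ := volume) hEsub)
  set m := (volume E).toReal with hmdef
  have hm_nonneg : 0 ≤ m := ENNReal.toReal_nonneg
  have hmL : m ≤ L := by
    have h1 := measure_mono (μ := volume) hEsub
    rw [hvol_s] at h1
    calc m ≤ (ENNReal.ofReal L).toReal := ENNReal.toReal_mono (by simp) h1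
      _ = L := ENNReal.toReal_ofReal hL.le
  have hvolE : volume E = ENNReal.ofReal m := (ENNReal.ofReal_toReal hEfin).symm
  -- rpow basic facts
  have hA : (0:ℝ) < A := lt_of_lt_of_le ha haA
  have hAa1 : 1 ≤ A/a := (one_le_div ha).mpr haA
  have hrp1 : 1 ≤ (A/a) ^ α := Real.one_le_rpow hAa1 hα
  have hεM_nn : 0 ≤ ε / M := div_nonneg hε.le hMnn
  have hrp2 : 0 ≤ (ε/M) ^ α := Real.rpow_nonneg hεM_nn α
  -- reduce to a real inequality
  suffices hreal : m ≤ (ℓ:ℝ) * 16 * (A/a) ^ α * (ε / M) ^ α * L by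
    rw [hvolE, hvol_s]
    calc ENNReal.ofReal m
        ≤ ENNReal.ofReal ((ℓ:ℝ) * 16 * (A/a) ^ α * (ε / M) ^ α * L) :=
          ENNReal.ofReal_le_ofReal hreal
      _ = ENNReal.ofReal ((ℓ:ℝ) * 16 * (A/a) ^ α * (ε / M) ^ α) * ENNReal.ofReal L := by
          rw [← ENNReal.ofReal_mul (by positivity)]
  -- trivial case : m = 0
  rcases eq_or_lt_of_le hm_nonneg with hm0 | hm
  · rw [← hm0]; positivity
  -- point selection
  obtain ⟨x, hxE, hgap⟩ := point_selection hb E hEsub ℓ hm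
  set d : ℝ := m / (2*(ℓ:ℝ)+2) with hddef
  have hd : 0 < d := by rw [hddef]; positivity
  have hgap' : ∀ i j, i ≤ ℓ → j ≤ ℓ → i ≠ j → d ≤ |x i - x j| := by
    intro i j hi hj hij
    rcases Nat.lt_or_ge i j with h | h
    · have := hgap i j h hj
      rw [abs_sub_comm, abs_of_nonneg (by linarith)]
      linarith
    · have hji : j < i := by omega
      have := hgap j i hji hi
      rw [abs_of_nonneg (by linarith)]
      linarith
  have hxmono : ∀ i j, i < j → j ≤ ℓ → x i < x j := by
    intro i j hij hj
    have := hgap i j hij hj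
    linarith
  have hxs : ∀ i ≤ ℓ, x i ∈ s := fun i hi => (hxE i hi).1
  have hxε : ∀ i ≤ ℓ, |f (x i)| < ε := fun i hi => (hxE i hi).2
  have hmemN : ∀ i, i ∈ N → i ≤ ℓ := fun i hi => Nat.lt_succ_iff.mp (Finset.mem_range.mp hi)
  -- key sum estimate at the selected points
  have key2 : ∀ c : ℝ, 0 ≤ c → (∀ i ≤ ℓ, |f (x i)| ≤ c) →
      a * d^ℓ ≤ (ℓ.factorial : ℝ) * ((ℓ:ℝ)+1) * c := by
    intro c hc hfc'
    obtain ⟨ξ₁, hξ₁s, hξ₁⟩ := dd_mvt hb ℓ f hf x hxmono hxs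
    have ha1 : a ≤ |iteratedDerivWithin ℓ f s ξ₁| := (hder ξ₁ hξ₁s).1
    have hprod₁ : ∀ i ∈ N, ∏ j ∈ N.erase i, |x i - x j|⁻¹ ≤ (d⁻¹)^ℓ := by
      intro i hi
      have hcard : (N.erase i).card = ℓ := by
        rw [Finset.card_erase_of_mem hi, hNdef, Finset.card_range]
        omega
      calc ∏ j ∈ N.erase i, |x i - x j|⁻¹ ≤ ∏ _j ∈ N.erase i, d⁻¹ := by
            refine Finset.prod_le_prod (fun j _ => by positivity) (fun j hj => ?_)
            have hj' := Finset.mem_erase.mp hj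
            exact inv_anti₀ hd (hgap' i j (hmemN i hi) (hmemN j hj'.2) (Ne.symm hj'.1))
        _ = (d⁻¹)^ℓ := by rw [Finset.prod_const, hcard]
    have habs : |∑ i ∈ N, f (x i) * ∏ j ∈ N.erase i, (x i - x j)⁻¹|
        ≤ ((ℓ:ℝ)+1) * (c * (d⁻¹)^ℓ) := by
      calc |∑ i ∈ N, f (x i) * ∏ j ∈ N.erase i, (x i - x j)⁻¹|
          ≤ ∑ i ∈ N, |f (x i) * ∏ j ∈ N.erase i, (x i - x j)⁻¹| :=
            Finset.abs_sum_le_sum_abs _ _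
        _ ≤ ∑ _i ∈ N, (c * (d⁻¹)^ℓ) := by
            refine Finset.sum_le_sum (fun i hi => ?_)
            rw [abs_mul, Finset.abs_prod]
            simp only [abs_inv]
            exact mul_le_mul (hfc' i (hmemN i hi)) (hprod₁ i hi)
              (Finset.prod_nonneg (fun j _ => by positivity)) hc
        _ = ((ℓ:ℝ)+1) * (c * (d⁻¹)^ℓ) := by
            rw [Finset.sum_const, hNdef, Finset.card_range, nsmul_eq_mul]
            push_cast; ring
    have h2 : a ≤ (ℓ.factorial : ℝ) * (((ℓ:ℝ)+1) * (c * (d⁻¹)^ℓ)) := by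
      refine le_trans ha1 ?_
      rw [hξ₁, abs_mul, abs_of_pos hfa]
      exact mul_le_mul_of_nonneg_left habs hfa.le
    have h3 : a * d^ℓ ≤ (ℓ.factorial : ℝ) * (((ℓ:ℝ)+1) * (c * (d⁻¹)^ℓ)) * d^ℓ :=
      mul_le_mul_of_nonneg_right h2 (by positivity)
    calc a * d^ℓ ≤ (ℓ.factorial : ℝ) * (((ℓ:ℝ)+1) * (c * (d⁻¹)^ℓ)) * d^ℓ := h3
      _ = (ℓ.factorial : ℝ) * ((ℓ:ℝ)+1) * c * ((d⁻¹*d)^ℓ) := by rw [mul_pow]; ring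
      _ = (ℓ.factorial : ℝ) * ((ℓ:ℝ)+1) * c := by
          rw [inv_mul_cancel₀ hd.ne', one_pow, mul_one]
  have hP2 : a * d^ℓ ≤ (ℓ.factorial : ℝ) * ((ℓ:ℝ)+1) * ε :=
    key2 ε hε.le (fun i hi => (hxε i hi).le)
  have hP2M : a * d^ℓ ≤ (ℓ.factorial : ℝ) * ((ℓ:ℝ)+1) * M :=
    key2 M hMnn (fun i hi => hM_ub _ (hxs i hi))
  have hMpos : 0 < M := by
    by_contra hcon
    push_neg at hcon
    have h1 : (ℓ.factorial : ℝ) * ((ℓ:ℝ)+1) * M ≤ 0 :=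
      mul_nonpos_of_nonneg_of_nonpos (by positivity) hcon
    linarith [mul_pos ha (pow_pos hd ℓ)]
  -- case ε ≥ M : trivial
  rcases le_or_gt M ε with hMε | hMε
  · have h1 : 1 ≤ ε / M := (one_le_div hMpos).mpr hMε
    have h2 : 1 ≤ (ε/M)^α := Real.one_le_rpow h1 hα
    have c1 : (1:ℝ) ≤ (ℓ:ℝ)*16 := by linarith
    have c2 : 1 ≤ (ℓ:ℝ)*16*(A/a)^α := by
      calc (1:ℝ) = 1*1 := (mul_one 1).symm
        _ ≤ ((ℓ:ℝ)*16)*((A/a)^α) := mul_le_mul c1 hrp1 zero_le_one (by linarith)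
    have c3 : 1 ≤ (ℓ:ℝ)*16*(A/a)^α*(ε/M)^α := by
      calc (1:ℝ) = 1*1 := (mul_one 1).symm
        _ ≤ ((ℓ:ℝ)*16*(A/a)^α)*((ε/M)^α) := mul_le_mul c2 h2 zero_le_one (by linarith)
    calc m ≤ L := hmL
      _ ≤ (ℓ:ℝ)*16*(A/a)^α*(ε/M)^α*L := le_mul_of_one_le_left hL.le c3
  -- main case : ε < M
  -- merged point family
  have hxney : ∀ i, i ≤ ℓ → x i ≠ y := by
    intro i hi he
    have := hxε i hi
    rw [he, ← hyM] at this
    linarith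
  have hQ : ∃ i, i = ℓ ∨ (i < ℓ ∧ y < x i) := ⟨ℓ, Or.inl rfl⟩
  set k := Nat.find hQ with hkdef
  have hkℓ : k ≤ ℓ := Nat.find_le (Or.inl rfl)
  have hchar1 : ∀ i, i < k → x i < y := by
    intro i hik
    have h := Nat.find_min hQ hik
    push_neg at h
    have hiℓ : i < ℓ := by omega
    exact lt_of_le_of_ne (h.2 hiℓ) (hxney i hiℓ.le)
  have hchar2 : ∀ i, k ≤ i → i < ℓ → y < x i := by
    intro i hki hiℓ
    have hspec := Nat.find_spec hQ
    rw [← hkdef] at hspec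
    rcases hspec with h | ⟨hkℓ', hyk⟩
    · omega
    · rcases Nat.eq_or_lt_of_le hki with h | h
      · rwa [← h]
      · exact lt_trans hyk (hxmono k i h hiℓ.le)
  set idx : ℕ → ℕ := fun i => if i < k then i else i - 1 with hidxdef
  set z : ℕ → ℝ := fun i => if i < k then x i else if i = k then y else x (i-1) with hzdef
  have hzk : z k = y := by simp [hzdef]
  have hz_idx : ∀ i, i ≠ k → z i = x (idx i) := by
    intro i hik
    by_cases h : i < k
    · simp [hzdef, hidxdef, h]
    · simp [hzdef, hidxdef, h, hik]
  have hidx_le : ∀ i, i ≤ ℓ → i ≠ k → idx i ≤ ℓ := by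
    intro i hi hik
    simp only [hidxdef]
    split_ifs <;> omega
  have hidx_mono : ∀ i j, i ≠ k → j ≠ k → i < j → idx i < idx j := by
    intro i j hik hjk hij
    rw [hidxdef]
    simp only
    split_ifs <;> omega
  have hzmono : ∀ i j, i < j → j ≤ ℓ → z i < z j := by
    intro i j hij hj
    by_cases hik : i = k
    · subst hik
      have hjk : ¬ j < k := by omega
      have hjk' : j ≠ k := by omega
      rw [hzk, hz_idx j hjk']
      have : idx j = j - 1 := by rw [hidxdef]; simp [hjk]
      rw [this]
      exact hchar2 (j-1) (by omega) (by omega)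
    · by_cases hjk : j = k
      · subst hjk
        rw [hzk, hz_idx i hik]
        have hik' : i < k := by omega
        have : idx i = i := by rw [hidxdef]; simp [hik']
        rw [this]
        exact hchar1 i hik'
      · rw [hz_idx i hik, hz_idx j hjk]
        exact hxmono _ _ (hidx_mono i j hik hjk hij) (hidx_le j hj hjk)
  have hz_mem : ∀ i ≤ ℓ, z i ∈ s := by
    intro i hi
    by_cases hik : i = k
    · rw [hik, hzk]; exact hys
    · rw [hz_idx i hik]; exact hxs _ (hidx_le i hi hik)
  have hz_gap : ∀ i j, i ≤ ℓ → j ≤ ℓ → i ≠ k → j ≠ k → i ≠ j → d ≤ |z i - z j| := by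
    intro i j hi hj hik hjk hij
    rw [hz_idx i hik, hz_idx j hjk]
    refine hgap' _ _ (hidx_le i hi hik) (hidx_le j hj hjk) ?_
    rcases Nat.lt_or_ge i j with h | h
    · exact Nat.ne_of_lt (hidx_mono i j hik hjk h)
    · exact (Nat.ne_of_lt (hidx_mono j i hjk hik (by omega))).symm
  have hz_ne : ∀ i j, i ≤ ℓ → j ≤ ℓ → i ≠ j → z i ≠ z j := by
    intro i j hi hj hij
    rcases Nat.lt_or_ge i j with h | h
    · exact ne_of_lt (hzmono i j h hj)
    · exact (ne_of_lt (hzmono j i (by omega) hi)).symm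
  have hzε : ∀ i, i ≤ ℓ → i ≠ k → |f (z i)| < ε := by
    intro i hi hik
    rw [hz_idx i hik]
    exact hxε _ (hidx_le i hi hik)
  -- apply dd_mvt to z
  obtain ⟨ξ₂, hξ₂s, hξ₂⟩ := dd_mvt hb ℓ f hf z hzmono hz_mem
  have hDA : |iteratedDerivWithin ℓ f s ξ₂| ≤ A := (hder ξ₂ hξ₂s).2
  set T : ℕ → ℝ := fun i => f (z i) * ∏ j ∈ N.erase i, (z i - z j)⁻¹ with hTdef
  have hkN : k ∈ N := Finset.mem_range.mpr (by omega)
  have hcardNk : (N.erase k).card = ℓ := by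
    rw [Finset.card_erase_of_mem hkN, hNdef, Finset.card_range]
    omega
  set W := ∏ j ∈ N.erase k, |y - z j| with hWdef
  have hW_pos : 0 < W := by
    refine Finset.prod_pos (fun j hj => abs_pos.mpr (sub_ne_zero.mpr ?_))
    have hj' := Finset.mem_erase.mp hj
    have h1 := hz_ne k j hkℓ (hmemN j hj'.2) (Ne.symm hj'.1)
    rw [hzk] at h1
    exact h1
  have habsL : ∀ u v : ℝ, u ∈ s → v ∈ s → |u - v| ≤ L := by
    intro u v hu hv
    rw [hsdef] at hu hv
    rw [abs_le]
    constructor <;> [linarith [hu.1, hv.2]; linarith [hu.2, hv.1]]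
  have hW_le : W ≤ L^ℓ := by
    calc W ≤ ∏ _j ∈ N.erase k, L := by
          refine Finset.prod_le_prod (fun j _ => abs_nonneg _) (fun j hj => ?_)
          exact habsL y (z j) hys (hz_mem j (hmemN j (Finset.mem_erase.mp hj).2))
      _ = L^ℓ := by rw [Finset.prod_const, hcardNk]
  have hTk_eq : |T k| = M * W⁻¹ := by
    have h1 : T k = f y * ∏ j ∈ N.erase k, (y - z j)⁻¹ := by
      simp only [hTdef, hzk]
    rw [h1, abs_mul, Finset.abs_prod]
    simp only [abs_inv]
    rw [Finset.prod_inv_distrib, ← hyM, hWdef]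
  have hTbound : M * W⁻¹ ≤ A / (ℓ.factorial:ℝ) + ∑ i ∈ N.erase k, |T i| := by
    have h1 : T k = (∑ i ∈ N, T i) - ∑ i ∈ N.erase k, T i := by
      rw [← Finset.add_sum_erase N T hkN]; ring
    have h3 : |∑ i ∈ N, T i| ≤ A / (ℓ.factorial:ℝ) := by
      rw [le_div_iff₀ hfa]
      calc |∑ i ∈ N, T i| * (ℓ.factorial:ℝ)
          = |(ℓ.factorial:ℝ) * ∑ i ∈ N, T i| := by
            rw [abs_mul, abs_of_pos hfa]; ring
        _ = |iteratedDerivWithin ℓ f s ξ₂| := by rw [← hξ₂]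
        _ ≤ A := hDA
    have h2 : |T k| ≤ |∑ i ∈ N, T i| + ∑ i ∈ N.erase k, |T i| := by
      rw [h1]
      refine le_trans (abs_sub _ _) (add_le_add le_rfl ?_)
      exact Finset.abs_sum_le_sum_abs _ _
    rw [hTk_eq] at h2
    linarith
  have hterm : ∀ i ∈ N.erase k, |T i| * W ≤ ε * (L/d)^(ℓ-1) := by
    intro i hi
    obtain ⟨hik, hiN⟩ := Finset.mem_erase.mp hi
    have hiℓ : i ≤ ℓ := hmemN i hiN
    set S := (N.erase k).erase i with hSdef
    have hcardS : S.card = ℓ - 1 := by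
      rw [hSdef, Finset.card_erase_of_mem hi, hcardNk]
    have hkNi : k ∈ N.erase i := Finset.mem_erase.mpr ⟨Ne.symm hik, hkN⟩
    have hWsplit : W = |y - z i| * ∏ j ∈ S, |y - z j| :=
      (Finset.mul_prod_erase (N.erase k) (fun j => |y - z j|) hi).symm
    have hdsplit : ∏ j ∈ N.erase i, |z i - z j| = |y - z i| * ∏ j ∈ S, |z i - z j| := by
      rw [← Finset.mul_prod_erase (N.erase i) (fun j => |z i - z j|) hkNi]
      rw [hzk, abs_sub_comm (z i) y]
      congr 1
      rw [hSdef, Finset.erase_right_comm]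
    have hTi : |T i| = |f (z i)| * (∏ j ∈ N.erase i, |z i - z j|)⁻¹ := by
      have h1 : T i = f (z i) * ∏ j ∈ N.erase i, (z i - z j)⁻¹ := by
        simp only [hTdef]
      rw [h1, abs_mul, Finset.abs_prod]
      simp only [abs_inv]
      rw [Finset.prod_inv_distrib]
    have hSprop : ∀ j ∈ S, j ≤ ℓ ∧ j ≠ k ∧ j ≠ i := by
      intro j hj
      have h1 := Finset.mem_erase.mp hj
      have h2 := Finset.mem_erase.mp h1.2
      exact ⟨hmemN j h2.2, h2.1, h1.1⟩
    have hppos : 0 < ∏ j ∈ S, |z i - z j| := by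
      refine Finset.prod_pos (fun j hj => abs_pos.mpr (sub_ne_zero.mpr ?_))
      obtain ⟨hj1, hj2, hj3⟩ := hSprop j hj
      exact hz_ne i j hiℓ hj1 (Ne.symm hj3)
    have hupos : 0 < |y - z i| := by
      refine abs_pos.mpr (sub_ne_zero.mpr ?_)
      have h1 := hz_ne k i hkℓ hiℓ (Ne.symm hik)
      rw [hzk] at h1
      exact h1
    have hgap2 : d^(ℓ-1) ≤ ∏ j ∈ S, |z i - z j| := by
      calc d^(ℓ-1) = ∏ _j ∈ S, d := by rw [Finset.prod_const, hcardS]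
        _ ≤ ∏ j ∈ S, |z i - z j| := by
            refine Finset.prod_le_prod (fun _ _ => hd.le) (fun j hj => ?_)
            obtain ⟨hj1, hj2, hj3⟩ := hSprop j hj
            exact hz_gap i j hiℓ hj1 hik hj2 (Ne.symm hj3)
    have hnum : ∏ j ∈ S, |y - z j| ≤ L^(ℓ-1) := by
      calc ∏ j ∈ S, |y - z j| ≤ ∏ _j ∈ S, L := by
            refine Finset.prod_le_prod (fun _ _ => abs_nonneg _) (fun j hj => ?_)
            exact habsL y (z j) hys (hz_mem j (hSprop j hj).1)
        _ = L^(ℓ-1) := by rw [Finset.prod_const, hcardS]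
    have hfzi : |f (z i)| ≤ ε := (hzε i hiℓ hik).le
    rw [hTi, hWsplit, hdsplit]
    have heq : |f (z i)| * (|y - z i| * ∏ j ∈ S, |z i - z j|)⁻¹
        * (|y - z i| * ∏ j ∈ S, |y - z j|)
        = |f (z i)| * (∏ j ∈ S, |y - z j|) / (∏ j ∈ S, |z i - z j|) := by
      field_simp
    rw [heq, div_pow, ← mul_div_assoc]
    refine div_le_div₀ (by positivity) ?_ (pow_pos hd _) hgap2
    exact mul_le_mul hfzi hnum (Finset.prod_nonneg (fun _ _ => abs_nonneg _)) hε.le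
  -- the master bound (ii)
  have hii : M ≤ A/(ℓ.factorial:ℝ) * L^ℓ + (ℓ:ℝ) * (ε * (L/d)^(ℓ-1)) := by
    have h4 : M = (M * W⁻¹) * W := by field_simp
    have h5 : (M*W⁻¹)*W ≤ (A/(ℓ.factorial:ℝ) + ∑ i ∈ N.erase k, |T i|) * W :=
      mul_le_mul_of_nonneg_right hTbound hW_pos.le
    have h6 : (A/(ℓ.factorial:ℝ) + ∑ i ∈ N.erase k, |T i|) * W
        = A/(ℓ.factorial:ℝ) * W + ∑ i ∈ N.erase k, (|T i| * W) := by
      rw [add_mul, Finset.sum_mul]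
    have h7 : ∑ i ∈ N.erase k, (|T i| * W) ≤ (ℓ:ℝ) * (ε * (L/d)^(ℓ-1)) := by
      calc ∑ i ∈ N.erase k, (|T i| * W) ≤ ∑ _i ∈ N.erase k, (ε * (L/d)^(ℓ-1)) :=
            Finset.sum_le_sum hterm
        _ = (ℓ:ℝ) * (ε * (L/d)^(ℓ-1)) := by
            rw [Finset.sum_const, hcardNk, nsmul_eq_mul]
    have h8 : A/(ℓ.factorial:ℝ) * W ≤ A/(ℓ.factorial:ℝ) * L^ℓ :=
      mul_le_mul_of_nonneg_left hW_le (div_nonneg hA.le hfa.le)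
    linarith
  -- final case analysis
  have hm_eq : m = (2*(ℓ:ℝ)+2)*d := by
    rw [hddef]
    field_simp
  rcases le_total (A/(ℓ.factorial:ℝ) * L^ℓ) ((ℓ:ℝ) * (ε * (L/d)^(ℓ-1))) with hAB | hAB
  · -- Case A
    have hcA : M ≤ 2*((ℓ:ℝ) * (ε * (L/d)^(ℓ-1))) := by linarith
    have hdL_nn : 0 ≤ d/L := by positivity
    have hinv : (L/d)^(ℓ-1) * (d/L)^(ℓ-1) = 1 := by
      have h0 : (L/d)*(d/L) = 1 := by
        field_simp
      rw [← mul_pow, h0, one_pow]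
    have e1 : M * (d/L)^(ℓ-1) ≤ 2*(ℓ:ℝ)*ε := by
      calc M * (d/L)^(ℓ-1) ≤ 2*((ℓ:ℝ) * (ε * (L/d)^(ℓ-1))) * (d/L)^(ℓ-1) :=
            mul_le_mul_of_nonneg_right hcA (by positivity)
        _ = 2*(ℓ:ℝ)*ε * ((L/d)^(ℓ-1) * (d/L)^(ℓ-1)) := by ring
        _ = 2*(ℓ:ℝ)*ε := by rw [hinv, mul_one]
    have h10 : d/L ≤ 1 := by
      rw [div_le_one hL]
      calc d ≤ m := by rw [hddef]; exact div_le_self hm_nonneg (by linarith)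
        _ ≤ L := hmL
    have e2 : (d/L)^ℓ ≤ 2*(ℓ:ℝ)*(ε/M) := by
      have h11 : (d/L)^ℓ = (d/L)^(ℓ-1) * (d/L) := by
        rw [← pow_succ, Nat.sub_add_cancel hℓ]
      have h12 : (d/L)^ℓ ≤ (d/L)^(ℓ-1) :=
        h11 ▸ mul_le_of_le_one_right (by positivity) h10
      have h13 : (d/L)^(ℓ-1) ≤ 2*(ℓ:ℝ)*(ε/M) := by
        rw [show 2*(ℓ:ℝ)*(ε/M) = (2*(ℓ:ℝ)*ε)/M by ring, le_div_iff₀ hMpos]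
        calc (d/L)^(ℓ-1) * M = M * (d/L)^(ℓ-1) := by ring
          _ ≤ 2*(ℓ:ℝ)*ε := e1
      linarith
    have e3 : d/L ≤ (2*(ℓ:ℝ)*(ε/M))^α := by
      have h14 : d/L = ((d/L)^ℓ)^α := by
        rw [hα_inv, Real.pow_rpow_inv_natCast hdL_nn hℓ0]
      rw [h14]
      exact Real.rpow_le_rpow (by positivity) e2 hα
    have e4 : (2*(ℓ:ℝ)*(ε/M))^α = (2*(ℓ:ℝ))^α * (ε/M)^α :=
      Real.mul_rpow (by positivity) hεM_nn
    have e5 : ((2:ℝ)*(ℓ:ℝ))^α ≤ 2 := by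
      have h2l : (2*(ℓ:ℝ)) ≤ (2:ℝ)^ℓ := by
        exact_mod_cast aux_two_mul_le ℓ hℓ
      calc ((2:ℝ)*(ℓ:ℝ))^α ≤ ((2:ℝ)^ℓ)^α :=
            Real.rpow_le_rpow (by positivity) h2l hα
        _ = 2 := by rw [hα_inv]; exact Real.pow_rpow_inv_natCast (by norm_num) hℓ0
    have e6 : d ≤ 2 * (ε/M)^α * L := by
      have h15 : d/L ≤ 2 * (ε/M)^α := by
        calc d/L ≤ (2*(ℓ:ℝ))^α * (ε/M)^α := by rw [← e4]; exact e3
          _ ≤ 2 * (ε/M)^α := mul_le_mul_of_nonneg_right e5 hrp2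
      calc d = (d/L)*L := (div_mul_cancel₀ d hL.ne').symm
        _ ≤ (2 * (ε/M)^α) * L := mul_le_mul_of_nonneg_right h15 hL.le
        _ = 2 * (ε/M)^α * L := by ring
    calc m = (2*(ℓ:ℝ)+2)*d := hm_eq
      _ ≤ (2*(ℓ:ℝ)+2)*(2*(ε/M)^α*L) := mul_le_mul_of_nonneg_left e6 (by positivity)
      _ = ((2*(ℓ:ℝ)+2)*2)*((ε/M)^α*L) := by ring
      _ ≤ ((ℓ:ℝ)*16)*((ε/M)^α*L) :=
          mul_le_mul_of_nonneg_right (by linarith) (mul_nonneg hrp2 hL.le)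
      _ = ((ℓ:ℝ)*16*1)*((ε/M)^α*L) := by ring
      _ ≤ ((ℓ:ℝ)*16*(A/a)^α)*((ε/M)^α*L) :=
          mul_le_mul_of_nonneg_right
            (mul_le_mul_of_nonneg_left hrp1 (by positivity)) (mul_nonneg hrp2 hL.le)
      _ = (ℓ:ℝ)*16*(A/a)^α*(ε/M)^α*L := by ring
  · -- Case B
    have hcB : M ≤ 2*(A/(ℓ.factorial:ℝ) * L^ℓ) := by linarith
    set K : ℝ := (ℓ.factorial:ℝ) with hKdef
    have f1 : d ≤ (K*((ℓ:ℝ)+1)*ε/a)^α := by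
      have h20 : d^ℓ ≤ K*((ℓ:ℝ)+1)*ε/a := by
        rw [le_div_iff₀ ha]
        calc d^ℓ * a = a * d^ℓ := mul_comm _ _
          _ ≤ (ℓ.factorial:ℝ) * ((ℓ:ℝ)+1) * ε := hP2
          _ = K*((ℓ:ℝ)+1)*ε := by rw [hKdef]
      have h21 : d = (d^ℓ)^α := by
        rw [hα_inv, Real.pow_rpow_inv_natCast hd.le hℓ0]
      rw [h21]
      exact Real.rpow_le_rpow (by positivity) h20 hα
    have f2 : (K*((ℓ:ℝ)+1)*ε/a)^α = (2*((ℓ:ℝ)+1))^α * (K*ε/(2*a))^α := by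
      rw [← Real.mul_rpow (by positivity) (by positivity)]
      congr 1
      field_simp
    have f3 : (2*((ℓ:ℝ)+1))^α ≤ 4 := by
      have h2l : (2*((ℓ:ℝ)+1)) ≤ (4:ℝ)^ℓ := by
        have := aux_two_succ_le ℓ hℓ
        exact_mod_cast Nat.cast_le.mpr this
      calc (2*((ℓ:ℝ)+1))^α ≤ ((4:ℝ)^ℓ)^α :=
            Real.rpow_le_rpow (by positivity) h2l hα
        _ = 4 := by rw [hα_inv]; exact Real.pow_rpow_inv_natCast (by norm_num) hℓ0
    have f4 : d ≤ 4 * (K*ε/(2*a))^α := by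
      calc d ≤ (K*((ℓ:ℝ)+1)*ε/a)^α := f1
        _ = (2*((ℓ:ℝ)+1))^α * (K*ε/(2*a))^α := f2
        _ ≤ 4 * (K*ε/(2*a))^α :=
            mul_le_mul_of_nonneg_right f3 (Real.rpow_nonneg (by positivity) α)
    have f5 : (K*ε/(2*a))^α ≤ (A/a)^α * (ε/M)^α * L := by
      have h30 : K*ε/(2*a*L^ℓ) ≤ (A/a)*(ε/M) := by
        have h31 : M ≤ 2*A*L^ℓ/K := by
          rw [div_eq_mul_inv] at hcB ⊢
          calc M ≤ 2*(A*K⁻¹ * L^ℓ) := hcB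
            _ = 2*A*L^ℓ*K⁻¹ := by ring
        have h32 : M*K ≤ 2*A*L^ℓ := (le_div_iff₀ hfa).mp h31
        have h33 : (A/a)*(ε/M) = A*ε/(a*M) := by rw [div_mul_div_comm]
        rw [h33, div_le_div_iff₀ (by positivity) (by positivity)]
        calc K*ε*(a*M) = (M*K)*(a*ε) := by ring
          _ ≤ (2*A*L^ℓ)*(a*ε) := mul_le_mul_of_nonneg_right h32 (by positivity)
          _ = A*ε*(2*a*L^ℓ) := by ring
      have h34 : ((K*ε/(2*a*L^ℓ)))^α ≤ ((A/a)*(ε/M))^α :=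
        Real.rpow_le_rpow (by positivity) h30 (by positivity)
      have h35 : ((A/a)*(ε/M))^α = (A/a)^α * (ε/M)^α :=
        Real.mul_rpow (by positivity) hεM_nn
      have h36 : (K*ε/(2*a*L^ℓ))^α = (K*ε/(2*a))^α / L := by
        rw [show K*ε/(2*a*L^ℓ) = K*ε/(2*a)/L^ℓ from (div_div (K*ε) (2*a) (L^ℓ)).symm]
        rw [Real.div_rpow (by positivity) (by positivity)]
        congr 1
        rw [hα_inv]
        exact Real.pow_rpow_inv_natCast hL.le hℓ0
      rw [h36, h35] at h34
      rw [div_le_iff₀ hL] at h34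
      linarith
    calc m = (2*(ℓ:ℝ)+2)*d := hm_eq
      _ ≤ (2*(ℓ:ℝ)+2)*(4 * (K*ε/(2*a))^α) := mul_le_mul_of_nonneg_left f4 (by positivity)
      _ = ((2*(ℓ:ℝ)+2)*4)*(K*ε/(2*a))^α := by ring
      _ ≤ ((ℓ:ℝ)*16)*(K*ε/(2*a))^α :=
          mul_le_mul_of_nonneg_right (by linarith)
            (Real.rpow_nonneg (by positivity) α)
      _ ≤ ((ℓ:ℝ)*16)*((A/a)^α * (ε/M)^α * L) :=
          mul_le_mul_of_nonneg_left f5 (by positivity)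
      _ = (ℓ:ℝ)*16*(A/a)^α*(ε/M)^α*L := by ring
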